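/- Let σ : [0,1] → ℝ be measurable with 0 < s1 ≤ σ(u) ≤ s2 for all u ∈ [0,1], let T(t) = ∫_0^t σ²(u) du, ρ = T(1), τ = T(t), let c1 < c2, and let I(x,t) = (Φ'(z1) - Φ'(z2))² / ( √(ρ-τ) · (Φ(z2) - Φ(z1)) · (Φ(-z2) + Φ(z1)) ) with z1 = (c1 - x)/√(ρ-τ), z2 = (c2 - x)/√(ρ-τ). Define for t ∈ (0,1) the function G(t) = σ²(t) / ( 2π √(ρ-τ) √(2πτ) ) · ∫_{-∞}^{∞} I(x,t) e^{-x²/2} dx. Then there exists a constant K > 0 such that G(t) ≤ K / √( t(1-t) ) for all t ∈ (0,1). -/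

import Mathlib

open MeasureTheory Real Set Filter

/-- The standard normal density `Φ'(z) = (1/√(2π)) e^{-z²/2}`. -/
noncomputable def Φ' (z : ℝ) : ℝ := (Real.sqrt (2 * Real.pi))⁻¹ * Real.exp (-z ^ 2 / 2)

/-- The standard normal cumulative distribution function `Φ`. -/
noncomputable def Φ (z : ℝ) : ℝ := ∫ u in Set.Iic z, Φ' u


/-- `I(x,t)` of the paper: with `T(t) = ∫_0^t σ²`, `ρ = T(1)`, `τ = T(t)`,
`r = √(ρ - τ)`, `z1 = (c1 - x)/r`, `z2 = (c2 - x)/r`. -/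
noncomputable def Ifun (σ : ℝ → ℝ) (c1 c2 t x : ℝ) : ℝ :=
  let r := Real.sqrt ((∫ u in (0:ℝ)..1, (σ u) ^ 2) - ∫ u in (0:ℝ)..t, (σ u) ^ 2)
  let z1 := (c1 - x) / r
  let z2 := (c2 - x) / r
  (Φ' z1 - Φ' z2) ^ 2 / (r * (Φ z2 - Φ z1) * (Φ (-z2) + Φ z1))

/-- `G(t) = σ²(t)/(2π √(ρ-τ) √(2πτ)) · ∫_ℝ I(x,t) e^{-x²/2} dx`, i.e. `E[α²(t)]`. -/
noncomputable def Gfun (σ : ℝ → ℝ) (c1 c2 t : ℝ) : ℝ :=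
  (σ t) ^ 2 /
      (2 * Real.pi *
        Real.sqrt ((∫ u in (0:ℝ)..1, (σ u) ^ 2) - ∫ u in (0:ℝ)..t, (σ u) ^ 2) *
        Real.sqrt (2 * Real.pi * ∫ u in (0:ℝ)..t, (σ u) ^ 2)) *
    ∫ x : ℝ, Ifun σ c1 c2 t x * Real.exp (-x ^ 2 / 2)

set_option maxHeartbeats 1000000

lemma Φ'_pos (z : ℝ) : 0 < Φ' z := by
  unfold Φ'
  positivity

lemma Φ'_eq (z : ℝ) : Φ' z = Φ' 0 * Real.exp (-z ^ 2 / 2) := by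
  simp [Φ']

lemma Φ'_mono_sq {a b : ℝ} (h : a ^ 2 ≤ b ^ 2) : Φ' b ≤ Φ' a := by
  unfold Φ'
  have h2 : Real.exp (-b ^ 2 / 2) ≤ Real.exp (-a ^ 2 / 2) := by
    apply Real.exp_le_exp.2; linarith
  have h3 : (0:ℝ) ≤ (Real.sqrt (2 * Real.pi))⁻¹ := by positivity
  exact mul_le_mul_of_nonneg_left h2 h3

lemma integrable_Φ' : Integrable Φ' := by
  have : Φ' = fun z => (Real.sqrt (2 * Real.pi))⁻¹ * Real.exp (-(1/2 : ℝ) * z ^ 2) := by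
    funext z; unfold Φ'; ring_nf
  rw [this]
  exact (integrable_exp_neg_mul_sq (by norm_num)).const_mul _

lemma Φ_sub (a b : ℝ) : Φ b - Φ a = ∫ z in a..b, Φ' z :=
  intervalIntegral.integral_Iic_sub_Iic integrable_Φ'.integrableOn integrable_Φ'.integrableOn

lemma Φ_gap_ge {a b m : ℝ} (hab : a ≤ b) (hm : ∀ u ∈ Icc a b, m ≤ Φ' u) :
    m * (b - a) ≤ Φ b - Φ a := by
  rw [Φ_sub]
  have h1 : m * (b - a) = ∫ _z in a..b, m := by
    rw [intervalIntegral.integral_const]; simp [mul_comm]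
  rw [h1]
  exact intervalIntegral.integral_mono_on hab intervalIntegrable_const
    integrable_Φ'.intervalIntegrable hm

lemma Φ_mono {a b : ℝ} (hab : a ≤ b) : Φ a ≤ Φ b := by
  have := Φ_gap_ge (m := 0) hab (fun u _ => (Φ'_pos u).le)
  linarith

lemma Φ_nonneg (z : ℝ) : 0 ≤ Φ z :=
  setIntegral_nonneg measurableSet_Iic (fun u _ => (Φ'_pos u).le)

lemma Φ_lb_nonneg {z : ℝ} (hz : 0 ≤ z) : Φ' 1 ≤ Φ z := by
  have h1 : Φ' 1 * (0 - (-1)) ≤ Φ 0 - Φ (-1) := by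
    apply Φ_gap_ge (by norm_num)
    intro u hu
    apply Φ'_mono_sq
    simp only [mem_Icc] at hu
    nlinarith [hu.1, hu.2]
  have h2 := Φ_nonneg (-1)
  have h3 := Φ_mono hz
  linarith

lemma Φ_lb_nonpos {z : ℝ} (hz : z ≤ 0) : Φ' (z - 1) ≤ Φ z := by
  have h1 : Φ' (z - 1) * (z - (z - 1)) ≤ Φ z - Φ (z - 1) := by
    apply Φ_gap_ge (by linarith)
    intro u hu
    apply Φ'_mono_sq
    simp only [mem_Icc] at hu
    nlinarith [hu.1, hu.2]
  have h2 := Φ_nonneg (z - 1)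
  have h3 : z - (z - 1) = 1 := by ring
  rw [h3, mul_one] at h1
  linarith

noncomputable def Cd (d : ℝ) : ℝ :=
  Φ' 0 * (Real.exp (d ^ 2) / (d * Φ' 1) + Real.exp 1 / (d / 2 * Φ' (d / 2)))

lemma Cd_pos {d : ℝ} (hd : 0 < d) : 0 < Cd d := by
  unfold Cd
  have := Φ'_pos 0; have := Φ'_pos 1; have := Φ'_pos (d/2)
  positivity

lemma Cd_lb1 {d : ℝ} (hd : 0 < d) : Φ' 0 * Real.exp (d ^ 2) / (d * Φ' 1) ≤ Cd d := by
  unfold Cd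
  have h1 := Φ'_pos 1; have h2 := Φ'_pos (d/2); have h0 := Φ'_pos 0
  have : (0:ℝ) ≤ Φ' 0 * (Real.exp 1 / (d / 2 * Φ' (d / 2))) := by positivity
  rw [mul_add]
  rw [mul_div_assoc]
  linarith

lemma Cd_lb2 {d : ℝ} (hd : 0 < d) : Φ' 0 * Real.exp 1 / (d / 2 * Φ' (d / 2)) ≤ Cd d := by
  unfold Cd
  have h1 := Φ'_pos 1; have h2 := Φ'_pos (d/2); have h0 := Φ'_pos 0
  have : (0:ℝ) ≤ Φ' 0 * (Real.exp (d ^ 2) / (d * Φ' 1)) := by positivity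
  rw [mul_add, mul_div_assoc]
  linarith

lemma J_le (d z1 z2 : ℝ) (hd : 0 < d) (h12 : z1 + d ≤ z2) :
    (Φ' z1 - Φ' z2) ^ 2 / ((Φ z2 - Φ z1) * (Φ (-z2) + Φ z1)) ≤
      Cd d * (Real.exp (-(z1 - d) ^ 2 / 2) + Real.exp (-(z1 + 1) ^ 2 / 2) +
        Real.exp (-(z2 + d) ^ 2 / 2) + Real.exp (-(z2 - 1) ^ 2 / 2)) := by
  have hCd := Cd_pos hd
  have e1pos : 0 < Real.exp (-(z1 - d) ^ 2 / 2) := Real.exp_pos _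
  have e2pos : 0 < Real.exp (-(z1 + 1) ^ 2 / 2) := Real.exp_pos _
  have e3pos : 0 < Real.exp (-(z2 + d) ^ 2 / 2) := Real.exp_pos _
  have e4pos : 0 < Real.exp (-(z2 - 1) ^ 2 / 2) := Real.exp_pos _
  rcases le_or_gt 0 z1 with h1 | h1
  · -- Case 1 : 0 ≤ z1
    have hp : d * Φ' (z1 + d) ≤ Φ z2 - Φ z1 := by
      have g : Φ' (z1 + d) * (z1 + d - z1) ≤ Φ (z1 + d) - Φ z1 := by
        apply Φ_gap_ge (by linarith)
        intro u hu; apply Φ'_mono_sq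
        simp only [mem_Icc] at hu; nlinarith [hu.1, hu.2]
      have g2 : Φ (z1 + d) ≤ Φ z2 := Φ_mono h12
      nlinarith [g, g2]
    have hq : Φ' 1 ≤ Φ (-z2) + Φ z1 := by
      have := Φ_lb_nonneg h1
      have := Φ_nonneg (-z2)
      linarith
    have hN : (Φ' z1 - Φ' z2) ^ 2 ≤ Φ' z1 ^ 2 := by
      have h2 : Φ' z2 ≤ Φ' z1 := Φ'_mono_sq (by nlinarith)
      have h3 := (Φ'_pos z2).le
      nlinarith
    have hdenpos : 0 < d * Φ' (z1 + d) * Φ' 1 :=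
      mul_pos (mul_pos hd (Φ'_pos _)) (Φ'_pos _)
    have step1 : (Φ' z1 - Φ' z2) ^ 2 / ((Φ z2 - Φ z1) * (Φ (-z2) + Φ z1)) ≤
        Φ' z1 ^ 2 / (d * Φ' (z1 + d) * Φ' 1) := by
      apply div_le_div₀ (sq_nonneg _) hN hdenpos
      exact mul_le_mul hp hq (Φ'_pos 1).le (by nlinarith [hp, mul_pos hd (Φ'_pos (z1+d))])
    have key : Φ' z1 ^ 2 = Φ' 0 * Real.exp (d ^ 2) * Real.exp (-(z1 - d) ^ 2 / 2) * Φ' (z1 + d) := by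
      rw [Φ'_eq z1, Φ'_eq (z1 + d)]
      have e : Real.exp (-z1 ^ 2 / 2) * Real.exp (-z1 ^ 2 / 2) =
          Real.exp (d ^ 2) * Real.exp (-(z1 - d) ^ 2 / 2) * Real.exp (-(z1 + d) ^ 2 / 2) := by
        rw [← Real.exp_add, ← Real.exp_add, ← Real.exp_add, Real.exp_eq_exp]; ring
      linear_combination (Φ' 0) ^ 2 * e
    have step2 : Φ' z1 ^ 2 / (d * Φ' (z1 + d) * Φ' 1) =
        Φ' 0 * Real.exp (d ^ 2) / (d * Φ' 1) * Real.exp (-(z1 - d) ^ 2 / 2) := by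
      rw [key]
      have h2 := (Φ'_pos (z1 + d)).ne'
      have h3 := (Φ'_pos 1).ne'
      field_simp
    calc (Φ' z1 - Φ' z2) ^ 2 / ((Φ z2 - Φ z1) * (Φ (-z2) + Φ z1))
        ≤ Φ' z1 ^ 2 / (d * Φ' (z1 + d) * Φ' 1) := step1
      _ = Φ' 0 * Real.exp (d ^ 2) / (d * Φ' 1) * Real.exp (-(z1 - d) ^ 2 / 2) := step2
      _ ≤ Cd d * (Real.exp (-(z1 - d) ^ 2 / 2) + Real.exp (-(z1 + 1) ^ 2 / 2) +
            Real.exp (-(z2 + d) ^ 2 / 2) + Real.exp (-(z2 - 1) ^ 2 / 2)) := by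
          have u1 : Φ' 0 * Real.exp (d ^ 2) / (d * Φ' 1) * Real.exp (-(z1 - d) ^ 2 / 2) ≤
              Cd d * Real.exp (-(z1 - d) ^ 2 / 2) :=
            mul_le_mul_of_nonneg_right (Cd_lb1 hd) e1pos.le
          have w : Cd d * Real.exp (-(z1 - d) ^ 2 / 2) ≤
              Cd d * (Real.exp (-(z1 - d) ^ 2 / 2) + Real.exp (-(z1 + 1) ^ 2 / 2) +
                Real.exp (-(z2 + d) ^ 2 / 2) + Real.exp (-(z2 - 1) ^ 2 / 2)) :=
            mul_le_mul_of_nonneg_left (by linarith) hCd.le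
          linarith
  · rcases le_or_gt z2 0 with h2 | h2
    · -- Case 2 : z2 ≤ 0
      have hp : d * Φ' (z2 - d) ≤ Φ z2 - Φ z1 := by
        have g : Φ' (z2 - d) * (z2 - (z2 - d)) ≤ Φ z2 - Φ (z2 - d) := by
          apply Φ_gap_ge (by linarith)
          intro u hu; apply Φ'_mono_sq
          simp only [mem_Icc] at hu; nlinarith [hu.1, hu.2]
        have g2 : Φ z1 ≤ Φ (z2 - d) := Φ_mono (by linarith)
        nlinarith [g, g2]
      have hq : Φ' 1 ≤ Φ (-z2) + Φ z1 := by
        have := Φ_lb_nonneg (neg_nonneg.2 h2)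
        have := Φ_nonneg z1
        linarith
      have hN : (Φ' z1 - Φ' z2) ^ 2 ≤ Φ' z2 ^ 2 := by
        have hh : Φ' z1 ≤ Φ' z2 := Φ'_mono_sq (by nlinarith)
        have h3 := (Φ'_pos z1).le
        nlinarith
      have hdenpos : 0 < d * Φ' (z2 - d) * Φ' 1 :=
        mul_pos (mul_pos hd (Φ'_pos _)) (Φ'_pos _)
      have step1 : (Φ' z1 - Φ' z2) ^ 2 / ((Φ z2 - Φ z1) * (Φ (-z2) + Φ z1)) ≤
          Φ' z2 ^ 2 / (d * Φ' (z2 - d) * Φ' 1) := by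
        apply div_le_div₀ (sq_nonneg _) hN hdenpos
        exact mul_le_mul hp hq (Φ'_pos 1).le (by nlinarith [hp, mul_pos hd (Φ'_pos (z2-d))])
      have key : Φ' z2 ^ 2 = Φ' 0 * Real.exp (d ^ 2) * Real.exp (-(z2 + d) ^ 2 / 2) * Φ' (z2 - d) := by
        rw [Φ'_eq z2, Φ'_eq (z2 - d)]
        have e : Real.exp (-z2 ^ 2 / 2) * Real.exp (-z2 ^ 2 / 2) =
            Real.exp (d ^ 2) * Real.exp (-(z2 + d) ^ 2 / 2) * Real.exp (-(z2 - d) ^ 2 / 2) := by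
          rw [← Real.exp_add, ← Real.exp_add, ← Real.exp_add, Real.exp_eq_exp]; ring
        linear_combination (Φ' 0) ^ 2 * e
      have step2 : Φ' z2 ^ 2 / (d * Φ' (z2 - d) * Φ' 1) =
          Φ' 0 * Real.exp (d ^ 2) / (d * Φ' 1) * Real.exp (-(z2 + d) ^ 2 / 2) := by
        rw [key]
        have hh2 := (Φ'_pos (z2 - d)).ne'
        have hh3 := (Φ'_pos 1).ne'
        field_simp
      calc (Φ' z1 - Φ' z2) ^ 2 / ((Φ z2 - Φ z1) * (Φ (-z2) + Φ z1))
          ≤ Φ' z2 ^ 2 / (d * Φ' (z2 - d) * Φ' 1) := step1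
        _ = Φ' 0 * Real.exp (d ^ 2) / (d * Φ' 1) * Real.exp (-(z2 + d) ^ 2 / 2) := step2
        _ ≤ Cd d * (Real.exp (-(z1 - d) ^ 2 / 2) + Real.exp (-(z1 + 1) ^ 2 / 2) +
              Real.exp (-(z2 + d) ^ 2 / 2) + Real.exp (-(z2 - 1) ^ 2 / 2)) := by
            have u1 : Φ' 0 * Real.exp (d ^ 2) / (d * Φ' 1) * Real.exp (-(z2 + d) ^ 2 / 2) ≤
                Cd d * Real.exp (-(z2 + d) ^ 2 / 2) :=
              mul_le_mul_of_nonneg_right (Cd_lb1 hd) e3pos.le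
            have w : Cd d * Real.exp (-(z2 + d) ^ 2 / 2) ≤
                Cd d * (Real.exp (-(z1 - d) ^ 2 / 2) + Real.exp (-(z1 + 1) ^ 2 / 2) +
                  Real.exp (-(z2 + d) ^ 2 / 2) + Real.exp (-(z2 - 1) ^ 2 / 2)) :=
              mul_le_mul_of_nonneg_left (by linarith) hCd.le
            linarith
    · -- Case 3 : z1 < 0 < z2
      have hp : d / 2 * Φ' (d / 2) ≤ Φ z2 - Φ z1 := by
        rcases le_or_gt (d / 2) z2 with hz | hz
        · have g : Φ' (d / 2) * (d / 2 - 0) ≤ Φ (d / 2) - Φ 0 := by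
            apply Φ_gap_ge (by linarith)
            intro u hu; apply Φ'_mono_sq
            simp only [mem_Icc] at hu; nlinarith [hu.1, hu.2]
          have g2 : Φ (d / 2) ≤ Φ z2 := Φ_mono hz
          have g3 : Φ z1 ≤ Φ 0 := Φ_mono h1.le
          nlinarith [g, g2, g3]
        · have hz1 : z1 ≤ -(d / 2) := by linarith
          have g : Φ' (d / 2) * (0 - -(d / 2)) ≤ Φ 0 - Φ (-(d / 2)) := by
            apply Φ_gap_ge (by linarith)
            intro u hu; apply Φ'_mono_sq
            simp only [mem_Icc] at hu; nlinarith [hu.1, hu.2]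
          have g2 : Φ 0 ≤ Φ z2 := Φ_mono h2.le
          have g3 : Φ z1 ≤ Φ (-(d / 2)) := Φ_mono hz1
          nlinarith [g, g2, g3]
      have hppos : 0 < Φ z2 - Φ z1 := lt_of_lt_of_le (mul_pos (by positivity) (Φ'_pos _)) hp
      have hq1 : Φ' (z1 - 1) ≤ Φ (-z2) + Φ z1 := by
        have := Φ_lb_nonpos h1.le
        have := Φ_nonneg (-z2)
        linarith
      have hq2 : Φ' (-z2 - 1) ≤ Φ (-z2) + Φ z1 := by
        have := Φ_lb_nonpos (neg_nonpos.2 h2.le)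
        have := Φ_nonneg z1
        linarith
      have hqpos : 0 < Φ (-z2) + Φ z1 := lt_of_lt_of_le (Φ'_pos _) hq1
      have hN : (Φ' z1 - Φ' z2) ^ 2 ≤ Φ' z1 ^ 2 + Φ' z2 ^ 2 := by
        nlinarith [(Φ'_pos z1).le, (Φ'_pos z2).le, mul_nonneg (Φ'_pos z1).le (Φ'_pos z2).le]
      have split : (Φ' z1 - Φ' z2) ^ 2 / ((Φ z2 - Φ z1) * (Φ (-z2) + Φ z1)) ≤
          Φ' z1 ^ 2 / (d / 2 * Φ' (d / 2) * Φ' (z1 - 1)) +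
          Φ' z2 ^ 2 / (d / 2 * Φ' (d / 2) * Φ' (-z2 - 1)) := by
        have hA : 0 < d / 2 * Φ' (d / 2) := mul_pos (by positivity) (Φ'_pos _)
        have t1 : Φ' z1 ^ 2 / ((Φ z2 - Φ z1) * (Φ (-z2) + Φ z1)) ≤
            Φ' z1 ^ 2 / (d / 2 * Φ' (d / 2) * Φ' (z1 - 1)) := by
          apply div_le_div₀ (sq_nonneg _) le_rfl (mul_pos hA (Φ'_pos _))
          exact mul_le_mul hp hq1 (Φ'_pos _).le hppos.le
        have t2 : Φ' z2 ^ 2 / ((Φ z2 - Φ z1) * (Φ (-z2) + Φ z1)) ≤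
            Φ' z2 ^ 2 / (d / 2 * Φ' (d / 2) * Φ' (-z2 - 1)) := by
          apply div_le_div₀ (sq_nonneg _) le_rfl (mul_pos hA (Φ'_pos _))
          exact mul_le_mul hp hq2 (Φ'_pos _).le hppos.le
        have hden : 0 < (Φ z2 - Φ z1) * (Φ (-z2) + Φ z1) := mul_pos hppos hqpos
        calc (Φ' z1 - Φ' z2) ^ 2 / ((Φ z2 - Φ z1) * (Φ (-z2) + Φ z1))
            ≤ (Φ' z1 ^ 2 + Φ' z2 ^ 2) / ((Φ z2 - Φ z1) * (Φ (-z2) + Φ z1)) :=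
              (div_le_div_iff_of_pos_right hden).2 hN
          _ = Φ' z1 ^ 2 / ((Φ z2 - Φ z1) * (Φ (-z2) + Φ z1)) +
              Φ' z2 ^ 2 / ((Φ z2 - Φ z1) * (Φ (-z2) + Φ z1)) := add_div _ _ _
          _ ≤ Φ' z1 ^ 2 / (d / 2 * Φ' (d / 2) * Φ' (z1 - 1)) +
              Φ' z2 ^ 2 / (d / 2 * Φ' (d / 2) * Φ' (-z2 - 1)) := add_le_add t1 t2
      have key1 : Φ' z1 ^ 2 = Φ' 0 * Real.exp 1 * Real.exp (-(z1 + 1) ^ 2 / 2) * Φ' (z1 - 1) := by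
        rw [Φ'_eq z1, Φ'_eq (z1 - 1)]
        have e : Real.exp (-z1 ^ 2 / 2) * Real.exp (-z1 ^ 2 / 2) =
            Real.exp 1 * Real.exp (-(z1 + 1) ^ 2 / 2) * Real.exp (-(z1 - 1) ^ 2 / 2) := by
          rw [← Real.exp_add, ← Real.exp_add, ← Real.exp_add, Real.exp_eq_exp]; ring
        linear_combination (Φ' 0) ^ 2 * e
      have key2 : Φ' z2 ^ 2 = Φ' 0 * Real.exp 1 * Real.exp (-(z2 - 1) ^ 2 / 2) * Φ' (-z2 - 1) := by
        rw [Φ'_eq z2, Φ'_eq (-z2 - 1)]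
        have e : Real.exp (-z2 ^ 2 / 2) * Real.exp (-z2 ^ 2 / 2) =
            Real.exp 1 * Real.exp (-(z2 - 1) ^ 2 / 2) * Real.exp (-(-z2 - 1) ^ 2 / 2) := by
          rw [← Real.exp_add, ← Real.exp_add, ← Real.exp_add, Real.exp_eq_exp]; ring
        linear_combination (Φ' 0) ^ 2 * e
      have hA : 0 < d / 2 * Φ' (d / 2) := mul_pos (by positivity) (Φ'_pos _)
      have step2a : Φ' z1 ^ 2 / (d / 2 * Φ' (d / 2) * Φ' (z1 - 1)) =
          Φ' 0 * Real.exp 1 / (d / 2 * Φ' (d / 2)) * Real.exp (-(z1 + 1) ^ 2 / 2) := by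
        rw [key1]
        have hh1 := (Φ'_pos (z1 - 1)).ne'
        have hh2 := (Φ'_pos (d / 2)).ne'
        field_simp
      have step2b : Φ' z2 ^ 2 / (d / 2 * Φ' (d / 2) * Φ' (-z2 - 1)) =
          Φ' 0 * Real.exp 1 / (d / 2 * Φ' (d / 2)) * Real.exp (-(z2 - 1) ^ 2 / 2) := by
        rw [key2]
        have hh1 := (Φ'_pos (-z2 - 1)).ne'
        have hh2 := (Φ'_pos (d / 2)).ne'
        field_simp
      rw [step2a, step2b] at split
      have hC := Cd_lb2 hd
      calc (Φ' z1 - Φ' z2) ^ 2 / ((Φ z2 - Φ z1) * (Φ (-z2) + Φ z1))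
          ≤ Φ' 0 * Real.exp 1 / (d / 2 * Φ' (d / 2)) * Real.exp (-(z1 + 1) ^ 2 / 2) +
            Φ' 0 * Real.exp 1 / (d / 2 * Φ' (d / 2)) * Real.exp (-(z2 - 1) ^ 2 / 2) := split
        _ ≤ Cd d * (Real.exp (-(z1 - d) ^ 2 / 2) + Real.exp (-(z1 + 1) ^ 2 / 2) +
              Real.exp (-(z2 + d) ^ 2 / 2) + Real.exp (-(z2 - 1) ^ 2 / 2)) := by
            have u2 : Φ' 0 * Real.exp 1 / (d / 2 * Φ' (d / 2)) * Real.exp (-(z1 + 1) ^ 2 / 2) ≤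
                Cd d * Real.exp (-(z1 + 1) ^ 2 / 2) := mul_le_mul_of_nonneg_right hC e2pos.le
            have u4 : Φ' 0 * Real.exp 1 / (d / 2 * Φ' (d / 2)) * Real.exp (-(z2 - 1) ^ 2 / 2) ≤
                Cd d * Real.exp (-(z2 - 1) ^ 2 / 2) := mul_le_mul_of_nonneg_right hC e4pos.le
            have w : Cd d * (Real.exp (-(z1 + 1) ^ 2 / 2) + Real.exp (-(z2 - 1) ^ 2 / 2)) ≤
                Cd d * (Real.exp (-(z1 - d) ^ 2 / 2) + Real.exp (-(z1 + 1) ^ 2 / 2) +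
                  Real.exp (-(z2 + d) ^ 2 / 2) + Real.exp (-(z2 - 1) ^ 2 / 2)) :=
              mul_le_mul_of_nonneg_left (by linarith) hCd.le
            have expand : Cd d * (Real.exp (-(z1 + 1) ^ 2 / 2) + Real.exp (-(z2 - 1) ^ 2 / 2)) =
                Cd d * Real.exp (-(z1 + 1) ^ 2 / 2) + Cd d * Real.exp (-(z2 - 1) ^ 2 / 2) :=
              mul_add _ _ _
            linarith

lemma gauss_shift_integrable (r c a : ℝ) (hr : 0 < r) :
    Integrable (fun x : ℝ => Real.exp (-((c - x) / r - a) ^ 2 / 2)) := by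
  have hb : (0:ℝ) < 1 / (2 * r ^ 2) := by positivity
  have h := (integrable_exp_neg_mul_sq hb).comp_sub_right (c - a * r)
  have heq : (fun x : ℝ => Real.exp (-(1 / (2 * r ^ 2)) * (x - (c - a * r)) ^ 2)) =
      fun x : ℝ => Real.exp (-((c - x) / r - a) ^ 2 / 2) := by
    funext x; congr 1; field_simp; ring
  rwa [heq] at h

lemma gauss_shift_integral (r c a : ℝ) (hr : 0 < r) :
    ∫ x : ℝ, Real.exp (-((c - x) / r - a) ^ 2 / 2) = Real.sqrt (2 * π) * r := by
  have hb : (0:ℝ) < 1 / (2 * r ^ 2) := by positivity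
  have heq : (fun x : ℝ => Real.exp (-((c - x) / r - a) ^ 2 / 2)) =
      fun x : ℝ => Real.exp (-(1 / (2 * r ^ 2)) * (x - (c - a * r)) ^ 2) := by
    funext x; congr 1; field_simp; ring
  rw [heq]
  rw [integral_sub_right_eq_self (fun x : ℝ => Real.exp (-(1 / (2 * r ^ 2)) * x ^ 2)) (c - a * r)]
  rw [integral_gaussian]
  rw [show π / (1 / (2 * r ^ 2)) = 2 * π * r ^ 2 by field_simp]
  rw [show 2 * π * r ^ 2 = (2 * π) * r ^ 2 by ring, Real.sqrt_mul (by positivity), Real.sqrt_sq hr.le]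

/-- `E[α²(t)] = G(t) ≤ K / √(t(1-t))` on `(0,1)` for some constant `K > 0`. -/
theorem G_bound (σ : ℝ → ℝ) (hσ : Measurable σ) (s1 s2 : ℝ) (hs1 : 0 < s1)
    (hσbd : ∀ u ∈ Set.Icc (0:ℝ) 1, s1 ≤ σ u ∧ σ u ≤ s2)
    (c1 c2 : ℝ) (hc : c1 < c2) :
    ∃ K : ℝ, 0 < K ∧ ∀ t ∈ Set.Ioo (0:ℝ) 1,
      Gfun σ c1 c2 t ≤ K / Real.sqrt (t * (1 - t)) := by
  have h0 := hσbd 0 ⟨le_refl 0, zero_le_one⟩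
  have hs2 : 0 < s2 := lt_of_lt_of_le hs1 (le_trans h0.1 h0.2)
  set d : ℝ := (c2 - c1) / s2 with hd_def
  have hd : 0 < d := div_pos (by linarith) hs2
  set M : ℝ := 4 * Cd d * Real.sqrt (2 * π) with hM_def
  have hMpos : 0 < M := by
    have := Cd_pos hd
    have : (0:ℝ) < Real.sqrt (2 * π) := Real.sqrt_pos.2 (by positivity)
    positivity
  refine ⟨s2 ^ 2 * M / (2 * π * Real.sqrt (2 * π) * s1 ^ 2), by positivity, ?_⟩
  intro t ht
  obtain ⟨ht0, ht1⟩ := ht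
  have ht01 : t ∈ Icc (0:ℝ) 1 := ⟨ht0.le, ht1.le⟩
  -- integrability of σ²
  have hmeas : Measurable fun u : ℝ => σ u ^ 2 := hσ.pow_const 2
  have hIcc : IntegrableOn (fun u : ℝ => σ u ^ 2) (Icc (0:ℝ) 1) := by
    refine Integrable.mono' (g := fun _ => s2 ^ 2)
      (integrableOn_const measure_Icc_lt_top.ne) hmeas.aestronglyMeasurable ?_
    filter_upwards [ae_restrict_mem measurableSet_Icc] with u hu
    have h := hσbd u hu
    rw [Real.norm_eq_abs, abs_of_nonneg (by nlinarith [h.1] : (0:ℝ) ≤ σ u ^ 2)]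
    nlinarith [h.1, h.2]
  have hii : ∀ a b : ℝ, a ∈ Icc (0:ℝ) 1 → b ∈ Icc (0:ℝ) 1 →
      IntervalIntegrable (fun u => σ u ^ 2) volume a b := by
    intro a b ha hb
    apply IntegrableOn.intervalIntegrable
    apply hIcc.mono_set
    rw [show Icc (0:ℝ) 1 = uIcc (0:ℝ) 1 from (uIcc_of_le zero_le_one).symm]
    exact uIcc_subset_uIcc (by rwa [uIcc_of_le zero_le_one]) (by rwa [uIcc_of_le zero_le_one])
  have h01 : (0:ℝ) ∈ Icc (0:ℝ) 1 := ⟨le_refl 0, zero_le_one⟩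
  have h11 : (1:ℝ) ∈ Icc (0:ℝ) 1 := ⟨zero_le_one, le_refl 1⟩
  simp only [Gfun]
  set τ : ℝ := ∫ u in (0:ℝ)..t, σ u ^ 2 with hτ_def
  set ρ : ℝ := ∫ u in (0:ℝ)..1, σ u ^ 2 with hρ_def
  -- bounds on τ and ρ - τ
  have hτ_lb : s1 ^ 2 * t ≤ τ := by
    have h := intervalIntegral.integral_mono_on (μ := volume) ht0.le
      (intervalIntegrable_const (c := s1 ^ 2)) (hii 0 t h01 ht01)
      (fun u hu => by
        have := hσbd u ⟨hu.1, le_trans hu.2 ht1.le⟩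
        nlinarith [this.1])
    rw [intervalIntegral.integral_const, smul_eq_mul] at h
    rw [hτ_def]; nlinarith [h]
  have hρτ_eq : ρ - τ = ∫ u in t..(1:ℝ), σ u ^ 2 := by
    have h := intervalIntegral.integral_add_adjacent_intervals (hii 0 t h01 ht01) (hii t 1 ht01 h11)
    rw [hτ_def, hρ_def]; linarith
  have hρτ_lb : s1 ^ 2 * (1 - t) ≤ ρ - τ := by
    rw [hρτ_eq]
    have h := intervalIntegral.integral_mono_on (μ := volume) ht1.le
      (intervalIntegrable_const (c := s1 ^ 2)) (hii t 1 ht01 h11)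
      (fun u hu => by
        have := hσbd u ⟨le_trans ht0.le hu.1, hu.2⟩
        nlinarith [this.1])
    rw [intervalIntegral.integral_const, smul_eq_mul] at h
    nlinarith [h]
  have hρτ_ub : ρ - τ ≤ s2 ^ 2 * (1 - t) := by
    rw [hρτ_eq]
    have h := intervalIntegral.integral_mono_on (μ := volume) ht1.le
      (hii t 1 ht01 h11) (intervalIntegrable_const (c := s2 ^ 2))
      (fun u hu => by
        have := hσbd u ⟨le_trans ht0.le hu.1, hu.2⟩
        nlinarith [this.1, this.2])
    rw [intervalIntegral.integral_const, smul_eq_mul] at h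
    nlinarith [h]
  set r : ℝ := Real.sqrt (ρ - τ) with hr_def
  have hρτ_pos : 0 < ρ - τ := lt_of_lt_of_le (mul_pos (pow_pos hs1 2) (by linarith)) hρτ_lb
  have hrpos : 0 < r := Real.sqrt_pos.2 hρτ_pos
  have hr_ub : r ≤ s2 := by
    rw [hr_def]
    calc Real.sqrt (ρ - τ) ≤ Real.sqrt (s2 ^ 2) := Real.sqrt_le_sqrt (by nlinarith [hρτ_ub, sq_nonneg s2, mul_pos hs2 hs2, ht0])
      _ = s2 := Real.sqrt_sq hs2.le
  have hr_lb : s1 * Real.sqrt (1 - t) ≤ r := by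
    rw [hr_def, show s1 * Real.sqrt (1 - t) = Real.sqrt (s1 ^ 2 * (1 - t)) by
      rw [Real.sqrt_mul (sq_nonneg s1), Real.sqrt_sq hs1.le]]
    exact Real.sqrt_le_sqrt hρτ_lb
  have hτ_pos : 0 < τ := lt_of_lt_of_le (mul_pos (pow_pos hs1 2) ht0) hτ_lb
  -- pointwise bound on the integrand
  have Ifun_eq : ∀ x : ℝ, Ifun σ c1 c2 t x =
      (Φ' ((c1 - x) / r) - Φ' ((c2 - x) / r)) ^ 2 /
        (r * (Φ ((c2 - x) / r) - Φ ((c1 - x) / r)) * (Φ (-((c2 - x) / r)) + Φ ((c1 - x) / r))) :=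
    fun x => rfl
  have hI0 : ∀ x : ℝ, 0 ≤ Ifun σ c1 c2 t x := by
    intro x
    rw [Ifun_eq]
    apply div_nonneg (sq_nonneg _)
    apply mul_nonneg (mul_nonneg hrpos.le _) _
    · have hz : (c1 - x) / r ≤ (c2 - x) / r := by gcongr
      exact sub_nonneg.2 (Φ_mono hz)
    · exact add_nonneg (Φ_nonneg _) (Φ_nonneg _)
  have hf_nonneg : ∀ x : ℝ, 0 ≤ Ifun σ c1 c2 t x * Real.exp (-x ^ 2 / 2) :=
    fun x => mul_nonneg (hI0 x) (Real.exp_pos _).le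
  set S : ℝ → ℝ := fun x =>
    Real.exp (-((c1 - x) / r - d) ^ 2 / 2) + Real.exp (-((c1 - x) / r + 1) ^ 2 / 2) +
      Real.exp (-((c2 - x) / r + d) ^ 2 / 2) + Real.exp (-((c2 - x) / r - 1) ^ 2 / 2) with hS_def
  have hfg : ∀ x : ℝ, Ifun σ c1 c2 t x * Real.exp (-x ^ 2 / 2) ≤ Cd d / r * S x := by
    intro x
    have hz : (c1 - x) / r + d ≤ (c2 - x) / r := by
      have h1 : d ≤ (c2 - c1) / r := by
        rw [hd_def]
        apply div_le_div_of_nonneg_left (by linarith) hrpos hr_ub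
      have h2 : (c1 - x) / r + (c2 - c1) / r = (c2 - x) / r := by
        rw [← add_div]; ring_nf
      linarith
    have hJ := J_le d ((c1 - x) / r) ((c2 - x) / r) hd hz
    have hIle : Ifun σ c1 c2 t x ≤ Cd d / r * S x := by
      rw [Ifun_eq]
      have hre : (Φ' ((c1 - x) / r) - Φ' ((c2 - x) / r)) ^ 2 /
          (r * (Φ ((c2 - x) / r) - Φ ((c1 - x) / r)) * (Φ (-((c2 - x) / r)) + Φ ((c1 - x) / r))) =
          ((Φ' ((c1 - x) / r) - Φ' ((c2 - x) / r)) ^ 2 /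
            ((Φ ((c2 - x) / r) - Φ ((c1 - x) / r)) * (Φ (-((c2 - x) / r)) + Φ ((c1 - x) / r)))) / r := by
        rw [div_div]; congr 1; ring
      rw [hre]
      have hstep : (Φ' ((c1 - x) / r) - Φ' ((c2 - x) / r)) ^ 2 /
            ((Φ ((c2 - x) / r) - Φ ((c1 - x) / r)) * (Φ (-((c2 - x) / r)) + Φ ((c1 - x) / r))) / r ≤
          Cd d * S x / r := by
        apply (div_le_div_iff_of_pos_right hrpos).2
        simp only [hS_def]
        exact hJ
      calc _ ≤ Cd d * S x / r := hstep
        _ = Cd d / r * S x := by rw [div_mul_eq_mul_div]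
    calc Ifun σ c1 c2 t x * Real.exp (-x ^ 2 / 2) ≤ Ifun σ c1 c2 t x * 1 := by
          apply mul_le_mul_of_nonneg_left _ (hI0 x)
          rw [Real.exp_le_one_iff]; nlinarith [sq_nonneg x]
      _ = Ifun σ c1 c2 t x := mul_one _
      _ ≤ Cd d / r * S x := hIle
  -- integrability and integral of the dominating function
  have hi1 := gauss_shift_integrable r c1 d hrpos
  have hi2 : Integrable (fun x : ℝ => Real.exp (-((c1 - x) / r + 1) ^ 2 / 2)) := by
    have h := gauss_shift_integrable r c1 (-1) hrpos
    simpa [sub_neg_eq_add] using h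
  have hi3 : Integrable (fun x : ℝ => Real.exp (-((c2 - x) / r + d) ^ 2 / 2)) := by
    have h := gauss_shift_integrable r c2 (-d) hrpos
    simpa [sub_neg_eq_add] using h
  have hi4 := gauss_shift_integrable r c2 1 hrpos
  have hSint : Integrable S := (((hi1.add hi2).add hi3).add hi4)
  have hgint : Integrable (fun x : ℝ => Cd d / r * S x) := hSint.const_mul _
  have hi12 : Integrable (fun x : ℝ => Real.exp (-((c1 - x) / r - d) ^ 2 / 2) +
      Real.exp (-((c1 - x) / r + 1) ^ 2 / 2)) := hi1.add hi2
  have hi123 : Integrable (fun x : ℝ => Real.exp (-((c1 - x) / r - d) ^ 2 / 2) +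
      Real.exp (-((c1 - x) / r + 1) ^ 2 / 2) + Real.exp (-((c2 - x) / r + d) ^ 2 / 2)) :=
    hi12.add hi3
  have hSval : ∫ x : ℝ, S x = 4 * (Real.sqrt (2 * π) * r) := by
    rw [hS_def]
    rw [integral_add hi123 hi4, integral_add hi12 hi3, integral_add hi1 hi2]
    rw [gauss_shift_integral r c1 d hrpos, gauss_shift_integral r c2 1 hrpos]
    have h2 : ∫ x : ℝ, Real.exp (-((c1 - x) / r + 1) ^ 2 / 2) = Real.sqrt (2 * π) * r := by
      rw [← gauss_shift_integral r c1 (-1) hrpos]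
      congr 1; funext x; rw [sub_neg_eq_add]
    have h3 : ∫ x : ℝ, Real.exp (-((c2 - x) / r + d) ^ 2 / 2) = Real.sqrt (2 * π) * r := by
      rw [← gauss_shift_integral r c2 (-d) hrpos]
      congr 1; funext x; rw [sub_neg_eq_add]
    rw [h2, h3]; ring
  have hIbound : ∫ x : ℝ, Ifun σ c1 c2 t x * Real.exp (-x ^ 2 / 2) ≤ M := by
    have h1 : ∫ x : ℝ, Ifun σ c1 c2 t x * Real.exp (-x ^ 2 / 2) ≤ ∫ x : ℝ, Cd d / r * S x :=
      integral_mono_of_nonneg (ae_of_all _ hf_nonneg) hgint (ae_of_all _ hfg)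
    have h2 : ∫ x : ℝ, Cd d / r * S x = M := by
      rw [integral_const_mul, hSval, hM_def]
      field_simp
    linarith [h1, h2.le, h2.ge]
  have hInonneg : 0 ≤ ∫ x : ℝ, Ifun σ c1 c2 t x * Real.exp (-x ^ 2 / 2) :=
    integral_nonneg hf_nonneg
  -- final arithmetic
  have hst : 0 < Real.sqrt t := Real.sqrt_pos.2 ht0
  have hs1t : 0 < Real.sqrt (1 - t) := Real.sqrt_pos.2 (by linarith)
  have hsq2pi : 0 < Real.sqrt (2 * π) := Real.sqrt_pos.2 (by positivity)
  have hsqτ : Real.sqrt (2 * π) * (s1 * Real.sqrt t) ≤ Real.sqrt (2 * π * τ) := by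
    rw [show Real.sqrt (2 * π) * (s1 * Real.sqrt t) = Real.sqrt (2 * π * (s1 ^ 2 * t)) by
      rw [Real.sqrt_mul (by positivity : (0:ℝ) ≤ 2 * π), Real.sqrt_mul (sq_nonneg s1),
        Real.sqrt_sq hs1.le]]
    exact Real.sqrt_le_sqrt (mul_le_mul_of_nonneg_left hτ_lb (by positivity))
  have hσt := hσbd t ht01
  have hA : σ t ^ 2 / (2 * π * r * Real.sqrt (2 * π * τ)) ≤
      s2 ^ 2 / (2 * π * (s1 * Real.sqrt (1 - t)) * (Real.sqrt (2 * π) * (s1 * Real.sqrt t))) := by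
    apply div_le_div₀ (sq_nonneg s2) (by nlinarith [hσt.1, hσt.2]) (by positivity)
    apply mul_le_mul _ hsqτ (by positivity) (by positivity)
    exact mul_le_mul_of_nonneg_left hr_lb (by positivity)
  have hfinal : s2 ^ 2 / (2 * π * (s1 * Real.sqrt (1 - t)) * (Real.sqrt (2 * π) * (s1 * Real.sqrt t))) * M =
      s2 ^ 2 * M / (2 * π * Real.sqrt (2 * π) * s1 ^ 2) / Real.sqrt (t * (1 - t)) := by
    rw [Real.sqrt_mul ht0.le]
    have n1 := hst.ne'
    have n2 := hs1t.ne'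
    have n3 := hsq2pi.ne'
    have n4 := hs1.ne'
    have n5 := Real.pi_pos.ne'
    field_simp
  have hAnn : 0 ≤ σ t ^ 2 / (2 * π * r * Real.sqrt (2 * π * τ)) :=
    div_nonneg (sq_nonneg _)
      (mul_nonneg (mul_nonneg (by positivity) hrpos.le) (Real.sqrt_nonneg _))
  calc σ t ^ 2 / (2 * π * r * Real.sqrt (2 * π * τ)) *
        ∫ x : ℝ, Ifun σ c1 c2 t x * Real.exp (-x ^ 2 / 2)
      ≤ σ t ^ 2 / (2 * π * r * Real.sqrt (2 * π * τ)) * M :=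
        mul_le_mul_of_nonneg_left hIbound hAnn
    _ ≤ s2 ^ 2 / (2 * π * (s1 * Real.sqrt (1 - t)) * (Real.sqrt (2 * π) * (s1 * Real.sqrt t))) * M :=
        mul_le_mul_of_nonneg_right hA hMpos.le
    _ = s2 ^ 2 * M / (2 * π * Real.sqrt (2 * π) * s1 ^ 2) / Real.sqrt (t * (1 - t)) := hfinal
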